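/- Midpoint inequality for multiplicatively convex derivative: if f : [a,b] → ℝ⁺ is differentiable, a < b, and f* := e^{f'/f} is multiplicatively convex on [a,b] with f* ≥ 1, then f((a+b)/2) · exp((1/(a-b)) ∫_a^b ln f(u) du) ≤ ( f*(a) · f*((a+b)/2)^4 · f*(b) )^{(b-a)/24}. -/

import Mathlib

open Real intervalIntegral

lemma lin_int (p q c0 c1 : ℝ) : (∫ t in p..q, (c0 + c1 * t)) = c0*(q-p) + c1*(q^2-p^2)/2 := by
  rw [intervalIntegral.integral_add (f := fun t => c0) (g := fun t => c1 * t) (intervalIntegrable_const)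
    ((continuous_const.mul continuous_id').intervalIntegrable _ _),
    intervalIntegral.integral_const, intervalIntegral.integral_const_mul, integral_id]
  simp [smul_eq_mul]; ring

lemma quad_int (p q d0 d1 d2 : ℝ) :
    (∫ u in p..q, (d0 + d1*u + d2*u^2)) = d0*(q-p) + d1*(q^2-p^2)/2 + d2*(q^3-p^3)/3 := by
  rw [intervalIntegral.integral_add (f := fun u => d0 + d1*u) (g := fun u => d2*u^2)
    ((continuous_const.add (continuous_const.mul continuous_id')).intervalIntegrable _ _)
    ((continuous_const.mul (continuous_pow 2)).intervalIntegrable _ _),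
    lin_int, intervalIntegral.integral_const_mul, integral_pow]
  norm_num; ring

set_option maxHeartbeats 1000000 in
lemma midpoint_aux (g D : ℝ → ℝ) (a b : ℝ) (hab : a < b)
    (hgd : ∀ x ∈ Set.Icc a b, HasDerivAt g (D x) x)
    (hint : IntervalIntegrable D MeasureTheory.volume a b)
    (hDconv : ∀ x ∈ Set.Icc a b, ∀ y ∈ Set.Icc a b, ∀ t ∈ Set.Icc (0:ℝ) 1,
      D (t * x + (1 - t) * y) ≤ t * D x + (1 - t) * D y)
    (hD0 : ∀ x ∈ Set.Icc a b, 0 ≤ D x) :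
    g ((a + b) / 2) + (1 / (a - b)) * (∫ u in a..b, g u) ≤
      (D a + 4 * D ((a + b) / 2) + D b) * ((b - a) / 24) := by
  set m : ℝ := (a + b) / 2 with hm_def
  have hba : (0:ℝ) < b - a := by linarith
  have ham : a < m := by rw [hm_def]; linarith
  have hmb : m < b := by rw [hm_def]; linarith
  have hmI : m ∈ Set.Icc a b := ⟨ham.le, hmb.le⟩
  have haI : a ∈ Set.Icc a b := ⟨le_refl _, hab.le⟩
  have hbI : b ∈ Set.Icc a b := ⟨hab.le, le_refl _⟩
  have hma : (0:ℝ) < m - a := by linarith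
  have huIcc : Set.uIcc a b = Set.Icc a b := Set.uIcc_of_le hab.le
  -- integrability of D on subintervals
  have hDint : ∀ u ∈ Set.Icc a b, ∀ v ∈ Set.Icc a b,
      IntervalIntegrable D MeasureTheory.volume u v := by
    intro u hu v hv
    refine hint.mono_set ?_
    exact Set.uIcc_subset_uIcc (by rw [huIcc]; exact hu) (by rw [huIcc]; exact hv)
  -- fundamental theorem of calculus
  have ftc : ∀ u ∈ Set.Icc a b, ∀ v ∈ Set.Icc a b, g v - g u = ∫ t in u..v, D t := by
    intro u hu v hv
    have hsub : Set.uIcc u v ⊆ Set.Icc a b := by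
      rw [← huIcc]
      exact Set.uIcc_subset_uIcc (by rw [huIcc]; exact hu) (by rw [huIcc]; exact hv)
    exact (intervalIntegral.integral_eq_sub_of_hasDerivAt
      (fun t ht => hgd t (hsub ht)) (hDint u hu v hv)).symm
  have hgcont : ContinuousOn g (Set.Icc a b) := fun x hx =>
    (hgd x hx).continuousAt.continuousWithinAt
  have hgint : ∀ u ∈ Set.Icc a b, ∀ v ∈ Set.Icc a b, u ≤ v →
      IntervalIntegrable g MeasureTheory.volume u v := by
    intro u hu v hv huv
    exact ContinuousOn.intervalIntegrable_of_Icc huv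
      (hgcont.mono (Set.Icc_subset_Icc hu.1 hv.2))
  -- chord bound for convex D on [a, m]
  have hchord : ∀ t ∈ Set.Icc a m, D t ≤ ((m - t) * D a + (t - a) * D m) / (m - a) := by
    intro t ht
    set s : ℝ := (m - t) / (m - a) with hs_def
    have hs0 : 0 ≤ s := div_nonneg (by linarith [ht.2]) hma.le
    have hs1 : s ≤ 1 := by rw [hs_def, div_le_one hma]; linarith [ht.1]
    have hts : s * a + (1 - s) * m = t := by rw [hs_def]; field_simp; try ring
    have h := hDconv a haI m hmI s ⟨hs0, hs1⟩
    rw [hts] at h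
    refine h.trans (le_of_eq ?_)
    rw [hs_def]; field_simp; try ring
  set c1 : ℝ := (D m - D a) / (m - a) with hc1
  set c0 : ℝ := D a - c1 * a with hc0
  have hL : ∀ t ∈ Set.Icc a m, D t ≤ c0 + c1 * t := by
    intro t ht
    refine (hchord t ht).trans (le_of_eq ?_)
    rw [hc0, hc1]; field_simp; ring
  -- pointwise bound on [a, m]
  have hptE1 : ∀ u ∈ Set.Icc a m, g m - g u ≤ c0*(m-u) + c1*(m^2-u^2)/2 := by
    intro u hu
    have huI : u ∈ Set.Icc a b := ⟨hu.1, le_trans hu.2 hmb.le⟩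
    rw [ftc u huI m hmI, ← lin_int u m c0 c1]
    apply intervalIntegral.integral_mono_on hu.2 (hDint u huI m hmI)
      ((continuous_const.add (continuous_const.mul continuous_id')).intervalIntegrable _ _)
    intro t ht
    exact hL t ⟨le_trans hu.1 ht.1, ht.2⟩
  -- first integral bound
  have hE1 : (∫ u in a..m, (g m - g u)) ≤ (b-a)^2/24 * (D a + 2 * D m) := by
    have h1 : (∫ u in a..m, (g m - g u)) ≤ ∫ u in a..m, (c0*(m-u) + c1*(m^2-u^2)/2) := by
      apply intervalIntegral.integral_mono_on ham.le
        (ContinuousOn.intervalIntegrable_of_Icc ham.le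
          (continuousOn_const.sub (hgcont.mono (Set.Icc_subset_Icc_right hmb.le))))
        (Continuous.intervalIntegrable (by fun_prop) _ _)
      exact hptE1
    have hma' : m - a ≠ 0 := ne_of_gt hma
    have h2 : (∫ u in a..m, (c0*(m-u) + c1*(m^2-u^2)/2)) = (m-a)^2/6 * (D a + 2*D m) := by
      have hcg : (∫ u in a..m, (c0*(m-u) + c1*(m^2-u^2)/2))
          = ∫ u in a..m, ((c0*m + c1*m^2/2) + (-c0)*u + (-(c1/2))*u^2) := by
        apply intervalIntegral.integral_congr
        intro u _; ring
      rw [hcg, quad_int, hc0, hc1]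
      field_simp
      ring
    have hm2 : (m-a)^2/6 * (D a + 2*D m) = (b-a)^2/24 * (D a + 2*D m) := by
      rw [hm_def]; ring
    linarith
  -- second integral bound
  have hE2 : (∫ u in m..b, (g m - g u)) ≤ 0 := by
    have hpt : ∀ u ∈ Set.Icc m b, 0 ≤ g u - g m := by
      intro u hu
      have huI : u ∈ Set.Icc a b := ⟨le_trans ham.le hu.1, hu.2⟩
      have h := ftc m hmI u huI
      have h2 : 0 ≤ ∫ t in m..u, D t :=
        intervalIntegral.integral_nonneg hu.1
          (fun t ht => hD0 t ⟨le_trans ham.le ht.1, le_trans ht.2 hu.2⟩)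
      linarith
    have h0 : 0 ≤ ∫ u in m..b, (g u - g m) :=
      intervalIntegral.integral_nonneg hmb.le hpt
    have heq : (∫ u in m..b, (g m - g u)) = -∫ u in m..b, (g u - g m) := by
      rw [← intervalIntegral.integral_neg]
      apply intervalIntegral.integral_congr
      intro u _
      dsimp
      ring
    rw [heq]
    linarith
  -- assemble
  have hsplit : (∫ u in a..b, g u) = (∫ u in a..m, g u) + ∫ u in m..b, g u :=
    (intervalIntegral.integral_add_adjacent_intervals
      (hgint a haI m hmI ham.le) (hgint m hmI b hbI hmb.le)).symm
  have e1 : (∫ u in a..m, (g m - g u)) = (m - a) * g m - ∫ u in a..m, g u := by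
    rw [intervalIntegral.integral_sub intervalIntegrable_const (hgint a haI m hmI ham.le),
      intervalIntegral.integral_const, smul_eq_mul]
  have e2 : (∫ u in m..b, (g m - g u)) = (b - m) * g m - ∫ u in m..b, g u := by
    rw [intervalIntegral.integral_sub intervalIntegrable_const (hgint m hmI b hbI hmb.le),
      intervalIntegral.integral_const, smul_eq_mul]
  have hDm : 0 ≤ D m := hD0 m hmI
  have hDb : 0 ≤ D b := hD0 b hbI
  have hq : 0 ≤ (b-a)^2 * (2 * D m + D b) :=
    mul_nonneg (sq_nonneg _) (by linarith)
  have key : (b - a) * g m - (∫ u in a..b, g u) ≤ (b-a)^2/24 * (D a + 4 * D m + D b) := by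
    rw [hsplit]
    nlinarith [hE1, hE2, e1, e2, hq]
  have hne : a - b ≠ 0 := by intro h; linarith
  have hne' : b - a ≠ 0 := ne_of_gt hba
  have eL : g m + 1/(a-b) * (∫ u in a..b, g u)
      = ((b-a) * g m - ∫ u in a..b, g u) * (1/(b-a)) := by
    field_simp
    ring
  have eR : (D a + 4*D m + D b) * ((b-a)/24)
      = ((b-a)^2/24 * (D a + 4*D m + D b)) * (1/(b-a)) := by
    field_simp
  rw [eL, eR]
  exact mul_le_mul_of_nonneg_right key (by positivity)

/-- Midpoint inequality for functions with multiplicatively convex multiplicative derivative. -/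
theorem mul_midpoint_inequality (f : ℝ → ℝ) (a b : ℝ) (hab : a < b)
    (hpos : ∀ x ∈ Set.Icc a b, 0 < f x)
    (hdiff : ∀ x ∈ Set.Icc a b, DifferentiableAt ℝ f x)
    (hint : IntervalIntegrable (fun x => deriv f x / f x) MeasureTheory.volume a b)
    (hconv : ∀ x ∈ Set.Icc a b, ∀ y ∈ Set.Icc a b, ∀ t ∈ Set.Icc (0:ℝ) 1,
      Real.exp (deriv f (t * x + (1 - t) * y) / f (t * x + (1 - t) * y)) ≤
        Real.exp (deriv f x / f x) ^ t * Real.exp (deriv f y / f y) ^ (1 - t))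
    (hone : ∀ x ∈ Set.Icc a b, 1 ≤ Real.exp (deriv f x / f x)) :
    f ((a + b) / 2) * Real.exp ((1 / (a - b)) * ∫ u in a..b, Real.log (f u)) ≤
      (Real.exp (deriv f a / f a) *
        Real.exp (deriv f ((a + b) / 2) / f ((a + b) / 2)) ^ (4:ℕ) *
        Real.exp (deriv f b / f b)) ^ ((b - a) / 24) := by
  have key := midpoint_aux (fun x => Real.log (f x)) (fun x => deriv f x / f x) a b hab
    (fun x hx => HasDerivAt.log ((hdiff x hx).hasDerivAt) (ne_of_gt (hpos x hx)))
    hint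
    (by
      intro x hx y hy t ht
      have h := hconv x hx y hy t ht
      rw [← Real.exp_mul, ← Real.exp_mul, ← Real.exp_add] at h
      have h2 := Real.exp_le_exp.mp h
      linarith)
    (by
      intro x hx
      have h := hone x hx
      rw [show (1:ℝ) = Real.exp 0 from Real.exp_zero.symm] at h
      exact Real.exp_le_exp.mp h)
  have hm : (a+b)/2 ∈ Set.Icc a b := ⟨by linarith, by linarith⟩
  have hRHS : (Real.exp (deriv f a / f a) *
        Real.exp (deriv f ((a + b) / 2) / f ((a + b) / 2)) ^ (4:ℕ) *
        Real.exp (deriv f b / f b)) ^ ((b - a) / 24)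
      = Real.exp ((deriv f a / f a + 4 * (deriv f ((a+b)/2) / f ((a+b)/2)) + deriv f b / f b)
          * ((b-a)/24)) := by
    rw [← Real.exp_nat_mul, ← Real.exp_add, ← Real.exp_add, ← Real.exp_mul]
    norm_num
  rw [hRHS]
  calc f ((a+b)/2) * Real.exp (1/(a-b) * ∫ u in a..b, Real.log (f u))
      = Real.exp (Real.log (f ((a+b)/2)) + 1/(a-b) * ∫ u in a..b, Real.log (f u)) := by
        rw [Real.exp_add, Real.exp_log (hpos _ hm)]
    _ ≤ _ := Real.exp_le_exp.mpr key
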